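/- For every MBSP instance and every valid schedule of that instance, the asynchronous cost of the schedule is at least the maximum, over all directed paths (w_1,…,w_k) in G, of Σ_{i : w_i is not a source of G} ω(w_i). -/

import Mathlib

namespace MBSP

/-- A transition (pebbling move) of a single processor. -/
inductive Op (ν : Type) where
  | load : ν → Op ν
  | save : ν → Op ν
  | compute : ν → Op ν
  | delete : ν → Op ν
deriving DecidableEq

/-- An MBSP instance: a DAG with compute weights `ω`, memory weights `μ`,
`P` processors, cache capacity `r`, communication cost `g` and synchronization cost `L`. -/
structure Inst (ν : Type) where
  edge : ν → ν → Prop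
  ω : ν → ℝ
  μ : ν → ℝ
  P : ℕ
  r : ℝ
  g : ℝ
  L : ℝ

variable {ν : Type} [DecidableEq ν]

def isSource (I : Inst ν) (v : ν) : Prop := ¬ ∃ u, I.edge u v

def isSink (I : Inst ν) (v : ν) : Prop := ¬ ∃ u, I.edge v u

def Acyclic (I : Inst ν) : Prop := ∀ v, ¬ Relation.TransGen I.edge v v

def opCost (I : Inst ν) : Op ν → ℝ
  | .load v => I.μ v * I.g
  | .save v => I.μ v * I.g
  | .compute v => I.ω v
  | .delete _ => 0

def applyOp (R B : Finset ν) : Op ν → Finset ν × Finset ν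
  | .load v => (insert v R, B)
  | .save v => (R, insert v B)
  | .compute v => (insert v R, B)
  | .delete v => (R.erase v, B)

def opOK (I : Inst ν) (R B : Finset ν) : Op ν → Prop
  | .load v => v ∈ B
  | .save v => v ∈ R
  | .compute v => (∃ u, I.edge u v) ∧ ∀ u, I.edge u v → u ∈ R
  | .delete _ => True

/-- The memory bound for a cache content `R`. -/
def memOK (I : Inst ν) (R : Finset ν) : Prop := ∑ v ∈ R, I.μ v ≤ I.r

/-- Run a sequence of transitions of one processor on a pair (cache, slow memory). -/
def run (R B : Finset ν) : List (Op ν) → Finset ν × Finset ν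
  | [] => (R, B)
  | op :: rest => run (applyOp R B op).1 (applyOp R B op).2 rest

/-- Validity of a sequence of transitions of one processor: every precondition holds
when the transition is applied and the memory bound holds throughout. -/
def seqValid (I : Inst ν) (R B : Finset ν) : List (Op ν) → Prop
  | [] => True
  | op :: rest => opOK I R B op ∧ memOK I (applyOp R B op).1 ∧
      seqValid I (applyOp R B op).1 (applyOp R B op).2 rest

/-- A superstep: for every processor, a compute phase (computes and deletes),
then a save phase, a delete phase and a load phase. -/
structure Superstep (ν : Type) (P : ℕ) where
  comp : Fin P → List (Op ν)
  save : Fin P → List ν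
  del : Fin P → List ν
  load : Fin P → List ν

structure Config (ν : Type) (P : ℕ) where
  R : Fin P → Finset ν
  B : Finset ν

abbrev Schedule (ν : Type) (P : ℕ) := List (Superstep ν P)

variable {P : ℕ}

def compOnly (l : List (Op ν)) : Prop :=
  ∀ op ∈ l, (∃ v, op = Op.compute v) ∨ (∃ v, op = Op.delete v)

def afterComp (c : Config ν P) (S : Superstep ν P) (p : Fin P) : Finset ν :=
  (run (c.R p) c.B (S.comp p)).1

/-- The shared slow memory after the save phases of all processors. -/
def newB (c : Config ν P) (S : Superstep ν P) : Finset ν :=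
  c.B ∪ Finset.univ.biUnion (fun p => (S.save p).toFinset)

def afterDel (c : Config ν P) (S : Superstep ν P) (p : Fin P) : Finset ν :=
  (S.del p).foldl Finset.erase (afterComp c S p)

def afterLoad (c : Config ν P) (S : Superstep ν P) (p : Fin P) : Finset ν :=
  afterDel c S p ∪ (S.load p).toFinset

/-- The configuration reached after executing a superstep. -/
def stepConfig (c : Config ν P) (S : Superstep ν P) : Config ν P :=
  ⟨fun p => afterLoad c S p, newB c S⟩

/-- Validity of a superstep at a configuration. -/
def ssValid (I : Inst ν) (c : Config ν I.P) (S : Superstep ν I.P) : Prop :=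
  (∀ p, compOnly (S.comp p)) ∧
  (∀ p, seqValid I (c.R p) c.B (S.comp p)) ∧
  (∀ p, ∀ v ∈ S.save p, v ∈ afterComp c S p) ∧
  (∀ p, ∀ v ∈ S.load p, v ∈ newB c S) ∧
  (∀ p, memOK I (afterLoad c S p))

def runSched (c : Config ν P) : Schedule ν P → Config ν P
  | [] => c
  | S :: rest => runSched (stepConfig c S) rest

def schedValidFrom (I : Inst ν) (c : Config ν I.P) : Schedule ν I.P → Prop
  | [] => True
  | S :: rest => ssValid I c S ∧ schedValidFrom I (stepConfig c S) rest

/-- `B` is exactly the set of sources of the DAG. -/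
def initB (I : Inst ν) (B : Finset ν) : Prop := ∀ v, v ∈ B ↔ isSource I v

/-- A valid MBSP schedule: starts with empty caches and the sources in slow memory,
every transition is legal and the memory bound holds throughout, and at the end
every sink is in slow memory. -/
def Valid (I : Inst ν) (sched : Schedule ν I.P) : Prop :=
  ∃ B0 : Finset ν, initB I B0 ∧
    schedValidFrom I ⟨fun _ => ∅, B0⟩ sched ∧
    ∀ v, isSink I v → v ∈ (runSched (⟨fun _ => ∅, B0⟩ : Config ν I.P) sched).B

def listCost (I : Inst ν) (l : List (Op ν)) : ℝ := (l.map (opCost I)).sum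

def ioCost (I : Inst ν) (l : List ν) : ℝ := (l.map (fun v => I.μ v * I.g)).sum

/-- The synchronous cost of a superstep. -/
noncomputable def ssCost (I : Inst ν) (S : Superstep ν I.P) : ℝ :=
  (⨆ p : Fin I.P, listCost I (S.comp p)) + (⨆ p : Fin I.P, ioCost I (S.save p)) +
    (⨆ p : Fin I.P, ioCost I (S.load p)) + I.L

/-- The synchronous cost of a schedule. -/
noncomputable def syncCost (I : Inst ν) (sched : Schedule ν I.P) : ℝ :=
  (sched.map (ssCost I)).sum

/-- Finishing times of the saves in a save phase starting at time `t`. -/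
def saveFinishes (I : Inst ν) : ℝ → List ν → List (ν × ℝ)
  | _, [] => []
  | t, v :: rest => (v, t + I.μ v * I.g) :: saveFinishes I (t + I.μ v * I.g) rest

def minSaveTime (entries : List (ν × ℝ)) (v : ν) : Option ℝ :=
  ((entries.filter (fun e => e.1 == v)).map Prod.snd).min?

/-- Finishing time of a load phase: each load waits for the value to be available
in slow memory (time `Γ v`). -/
def loadFold (I : Inst ν) (Γ : ν → Option ℝ) : ℝ → List ν → ℝ
  | t, [] => t
  | t, v :: rest => loadFold I Γ (max t ((Γ v).getD 0) + I.μ v * I.g) rest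

/-- One superstep of the asynchronous execution: updates the finishing time of
every processor and the availability times `Γ` of the values in slow memory. -/
def asyncSS (I : Inst ν) (S : Superstep ν I.P)
    (st : (Fin I.P → ℝ) × (ν → Option ℝ)) : (Fin I.P → ℝ) × (ν → Option ℝ) :=
  let t1 : Fin I.P → ℝ := fun p => st.1 p + listCost I (S.comp p)
  let entries : List (ν × ℝ) :=
    ((List.finRange I.P).map (fun p => saveFinishes I (t1 p) (S.save p))).flatten
  let Γ' : ν → Option ℝ := fun v => (st.2 v).orElse (fun _ => minSaveTime entries v)
  let t2 : Fin I.P → ℝ := fun p => t1 p + ioCost I (S.save p)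
  (fun p => loadFold I Γ' (t2 p) (S.load p), Γ')

def asyncRun (I : Inst ν) (st : (Fin I.P → ℝ) × (ν → Option ℝ)) :
    Schedule ν I.P → (Fin I.P → ℝ) × (ν → Option ℝ)
  | [] => st
  | S :: rest => asyncRun I (asyncSS I S st) rest

/-- The asynchronous cost (makespan) of a schedule. -/
noncomputable def asyncCost (I : Inst ν) (sched : Schedule ν I.P) : ℝ :=
  ⨆ p : Fin I.P, (asyncRun I (fun _ => (0 : ℝ), fun _ => none) sched).1 p


section Aux
set_option linter.unusedSectionVars false
set_option linter.unusedVariables false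

variable {ν : Type} [DecidableEq ν] [Fintype ν]

theorem edge_wf {I : Inst ν} (hac : Acyclic I) : WellFounded I.edge := by
  haveI : IsTrans ν (Relation.TransGen I.edge) := ⟨fun a b c => Relation.TransGen.trans⟩
  haveI : IsIrrefl ν (Relation.TransGen I.edge) := ⟨hac⟩
  exact Subrelation.wf (fun h => Relation.TransGen.single h)
    (Finite.wellFounded_of_trans_of_irrefl _)

theorem swap_wf {I : Inst ν} (hac : Acyclic I) : WellFounded (Function.swap I.edge) := by
  haveI : IsTrans ν (Relation.TransGen (Function.swap I.edge)) :=
    ⟨fun a b c => Relation.TransGen.trans⟩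
  haveI : IsIrrefl ν (Relation.TransGen (Function.swap I.edge)) :=
    ⟨fun v h => hac v (Relation.transGen_swap.mp h)⟩
  exact Subrelation.wf (fun h => Relation.TransGen.single h)
    (Finite.wellFounded_of_trans_of_irrefl _)

open Classical in
noncomputable def W (I : Inst ν) (hwf : WellFounded I.edge) : ν → ℝ :=
  hwf.fix (fun v rec =>
    if h : (Finset.univ.filter (fun u => I.edge u v)).Nonempty then
      I.ω v + (Finset.univ.filter (fun u => I.edge u v)).attach.sup'
        (Finset.attach_nonempty_iff.mpr h)
        (fun u => rec u.1 ((Finset.mem_filter.mp u.2).2))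
    else 0)

open Classical in
theorem W_eq (I : Inst ν) (hwf : WellFounded I.edge) (v : ν) :
    W I hwf v = if h : (Finset.univ.filter (fun u => I.edge u v)).Nonempty then
      I.ω v + (Finset.univ.filter (fun u => I.edge u v)).attach.sup'
        (Finset.attach_nonempty_iff.mpr h) (fun u => W I hwf u.1)
    else 0 := by
  unfold W; rw [WellFounded.fix_eq]

variable {I : Inst ν} (hwf : WellFounded I.edge)

theorem W_nonneg (hω : ∀ v, 0 ≤ I.ω v) (v : ν) : 0 ≤ W I hwf v := by
  induction v using hwf.induction with
  | _ v ih =>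
    rw [W_eq]
    split
    · rename_i h
      classical
      obtain ⟨u, hu⟩ := h
      have hu' : I.edge u v := (Finset.mem_filter.mp hu).2
      have h2 := Finset.le_sup'
        (f := fun u : {x // x ∈ Finset.univ.filter (fun u => I.edge u v)} => W I hwf u.1)
        (Finset.mem_attach _ ⟨u, hu⟩)
      exact add_nonneg (hω v) (le_trans (ih u hu') h2)
    · exact le_rfl

theorem W_source {v : ν} (hs : isSource I v) : W I hwf v = 0 := by
  classical
  rw [W_eq, dif_neg]
  rintro ⟨u, hu⟩
  exact hs ⟨u, (Finset.mem_filter.mp hu).2⟩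

theorem W_parents_le {v : ν} {t : ℝ} (h : ∃ u, I.edge u v)
    (hpar : ∀ u, I.edge u v → W I hwf u ≤ t) : W I hwf v ≤ I.ω v + t := by
  classical
  obtain ⟨u, hu⟩ := h
  rw [W_eq, dif_pos ⟨u, Finset.mem_filter.mpr ⟨Finset.mem_univ _, hu⟩⟩]
  refine add_le_add le_rfl (Finset.sup'_le _ _ fun b _ => ?_)
  exact hpar b.1 (Finset.mem_filter.mp b.2).2

theorem W_edge_le (hω : ∀ v, 0 ≤ I.ω v) {u v : ν} (h : I.edge u v) :
    W I hwf u + I.ω v ≤ W I hwf v := by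
  classical
  have hm : u ∈ Finset.univ.filter (fun u => I.edge u v) :=
    Finset.mem_filter.mpr ⟨Finset.mem_univ _, h⟩
  rw [W_eq (v := v), dif_pos ⟨u, hm⟩]
  have h2 := Finset.le_sup'
    (f := fun u : {x // x ∈ Finset.univ.filter (fun u => I.edge u v)} => W I hwf u.1)
    (Finset.mem_attach _ ⟨u, hm⟩)
  linarith

theorem ind_le_W (hω : ∀ v, 0 ≤ I.ω v) (v : ν) :
    Set.indicator {x | ¬ isSource I x} I.ω v ≤ W I hwf v := by
  by_cases h : isSource I v
  · rw [Set.indicator_of_notMem (by simpa using h)]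
    exact W_nonneg hwf hω v
  · rw [Set.indicator_of_mem (by simpa using h)]
    simp only [isSource, not_not] at h
    obtain ⟨u, hu⟩ := h
    have := W_edge_le hwf hω hu
    have := W_nonneg hwf hω u
    linarith

theorem chain_sum_le (hω : ∀ v, 0 ≤ I.ω v) :
    ∀ (l : List ν) (v : ν), List.Chain I.edge v l →
      W I hwf v + (l.map (Set.indicator {x | ¬ isSource I x} I.ω)).sum ≤
        W I hwf ((v :: l).getLast (by simp)) := by
  intro l
  induction l with
  | nil => simp
  | cons w rest ih =>
    intro v hch
    rw [List.Chain, List.isChain_cons_cons] at hch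
    obtain ⟨hvw, hch'⟩ := hch
    have h1 : Set.indicator {x | ¬ isSource I x} I.ω w = I.ω w := by
      refine Set.indicator_of_mem ?_ _
      simp only [Set.mem_setOf_eq, isSource, not_not]
      exact ⟨v, hvw⟩
    have h2 := W_edge_le hwf hω hvw
    have h3 := ih w hch'
    have h4 : ((v :: w :: rest).getLast (by simp)) = ((w :: rest).getLast (by simp)) :=
      List.getLast_cons (by simp)
    rw [h4]
    simp only [List.map_cons, List.sum_cons] at h3 ⊢
    rw [h1] at *
    linarith

theorem exists_sink (hswf : WellFounded (Function.swap I.edge)) (hω : ∀ v, 0 ≤ I.ω v)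
    (v : ν) : ∃ s, isSink I s ∧ W I hwf v ≤ W I hwf s := by
  induction v using hswf.induction with
  | _ v ih =>
    by_cases h : isSink I v
    · exact ⟨v, h, le_rfl⟩
    · simp only [isSink, not_not] at h
      obtain ⟨u, hu⟩ := h
      obtain ⟨s, hs, hle⟩ := ih u hu
      have h2 := W_edge_le hwf hω hu
      have h3 := hω u
      exact ⟨s, hs, by linarith⟩

-- cost nonnegativity
theorem opCost_nonneg (hω : ∀ v, 0 ≤ I.ω v) (hμ : ∀ v, 0 ≤ I.μ v) (hg : 0 ≤ I.g)
    (op : Op ν) : 0 ≤ opCost I op := by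
  cases op <;> simp [opCost] <;> first | exact mul_nonneg (hμ _) hg | exact hω _

theorem listCost_nonneg (hω : ∀ v, 0 ≤ I.ω v) (hμ : ∀ v, 0 ≤ I.μ v) (hg : 0 ≤ I.g)
    (l : List (Op ν)) : 0 ≤ listCost I l := by
  refine List.sum_nonneg ?_
  intro x hx
  obtain ⟨op, _, rfl⟩ := List.mem_map.mp hx
  exact opCost_nonneg hω hμ hg op

theorem ioCost_nonneg (hμ : ∀ v, 0 ≤ I.μ v) (hg : 0 ≤ I.g) (l : List ν) :
    0 ≤ ioCost I l := by
  refine List.sum_nonneg ?_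
  intro x hx
  obtain ⟨v, _, rfl⟩ := List.mem_map.mp hx
  exact mul_nonneg (hμ _) hg

-- comp phase
theorem comp_run (hω : ∀ v, 0 ≤ I.ω v) :
    ∀ (l : List (Op ν)) (R B : Finset ν) (t : ℝ), compOnly l → seqValid I R B l →
      (∀ v ∈ R, W I hwf v ≤ t) → ∀ v ∈ (run R B l).1, W I hwf v ≤ t + listCost I l := by
  intro l
  induction l with
  | nil =>
    intro R B t _ _ hR v hv
    simpa [run, listCost] using hR v hv
  | cons op rest ih =>
    intro R B t hco hsv hR v hv
    obtain ⟨hok, hm, hrest⟩ := hsv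
    have hco' : compOnly rest := fun o ho => hco o (List.mem_cons_of_mem _ ho)
    rcases hco op (List.mem_cons_self) with ⟨w, rfl⟩ | ⟨w, rfl⟩
    · -- compute
      simp only [run, applyOp] at hv hrest
      have hbound : ∀ u ∈ insert w R, W I hwf u ≤ t + I.ω w := by
        intro u hu
        rcases Finset.mem_insert.mp hu with rfl | hu
        · have h1 : W I hwf u ≤ I.ω u + t :=
            W_parents_le hwf hok.1 (fun x hx => hR x (hok.2 x hx))
          linarith
        · have := hR u hu; have := hω w; linarith
      have h2 := ih (insert w R) B (t + I.ω w) hco' hrest hbound v hv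
      simp only [listCost, List.map_cons, List.sum_cons, opCost] at h2 ⊢
      linarith
    · -- delete
      simp only [run, applyOp] at hv hrest
      have hbound : ∀ u ∈ R.erase w, W I hwf u ≤ t := fun u hu =>
        hR u (Finset.mem_of_mem_erase hu)
      have h2 := ih (R.erase w) B t hco' hrest hbound v hv
      simp only [listCost, List.map_cons, List.sum_cons, opCost] at h2 ⊢
      linarith

-- saveFinishes
theorem saveFinishes_spec (hμ : ∀ v, 0 ≤ I.μ v) (hg : 0 ≤ I.g) :
    ∀ (l : List ν) (t : ℝ) (e : ν × ℝ), e ∈ saveFinishes I t l →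
      e.1 ∈ l ∧ t ≤ e.2 ∧ e.2 ≤ t + ioCost I l := by
  intro l
  induction l with
  | nil => intro t e he; simp [saveFinishes] at he
  | cons v rest ih =>
    intro t e he
    have hmg : 0 ≤ I.μ v * I.g := mul_nonneg (hμ _) hg
    have hio : 0 ≤ ioCost I rest := ioCost_nonneg hμ hg rest
    simp only [ioCost] at hio
    simp only [saveFinishes, List.mem_cons] at he
    rcases he with rfl | he
    · simp only [ioCost, List.map_cons, List.sum_cons]
      exact ⟨List.mem_cons_self, by linarith, by linarith⟩
    · obtain ⟨h1, h2, h3⟩ := ih (t + I.μ v * I.g) e he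
      simp only [ioCost, List.map_cons, List.sum_cons] at h3 ⊢
      exact ⟨List.mem_cons_of_mem _ h1, by linarith, by linarith⟩

theorem saveFinishes_mem : ∀ (l : List ν) (t : ℝ) (v : ν), v ∈ l →
    ∃ τ, (v, τ) ∈ saveFinishes I t l := by
  intro l
  induction l with
  | nil => simp
  | cons w rest ih =>
    intro t v hv
    rcases List.mem_cons.mp hv with rfl | hv
    · exact ⟨t + I.μ v * I.g, List.mem_cons_self⟩
    · obtain ⟨τ, hτ⟩ := ih (t + I.μ w * I.g) v hv
      exact ⟨τ, List.mem_cons_of_mem _ hτ⟩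

-- minSaveTime
theorem minSaveTime_some {entries : List (ν × ℝ)} {v : ν} {t : ℝ}
    (h : minSaveTime entries v = some t) : (v, t) ∈ entries := by
  have hmem : t ∈ (entries.filter (fun e => e.1 == v)).map Prod.snd :=
    List.min?_mem h
  obtain ⟨e, he, rfl⟩ := List.mem_map.mp hmem
  have := List.mem_filter.mp he
  have he1 : e.1 = v := by simpa using this.2
  have : e = (v, e.2) := by rw [← he1]
  rw [← this]
  exact List.mem_filter.mp he |>.1

theorem minSaveTime_none {entries : List (ν × ℝ)} {v : ν}
    (h : minSaveTime entries v = none) : ∀ τ, (v, τ) ∉ entries := by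
  intro τ hτ
  have h0 : (entries.filter (fun e => e.1 == v)).map Prod.snd = [] :=
    List.min?_eq_none_iff.mp h
  have h1 : (v, τ) ∈ entries.filter (fun e => e.1 == v) :=
    List.mem_filter.mpr ⟨hτ, by simp⟩
  have : τ ∈ (entries.filter (fun e => e.1 == v)).map Prod.snd :=
    List.mem_map.mpr ⟨(v, τ), h1, rfl⟩
  rw [h0] at this
  simp at this

-- loadFold
theorem loadFold_ge (hμ : ∀ v, 0 ≤ I.μ v) (hg : 0 ≤ I.g) (Γ : ν → Option ℝ) :
    ∀ (l : List ν) (t : ℝ), t ≤ loadFold I Γ t l := by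
  intro l
  induction l with
  | nil => intro t; simp [loadFold]
  | cons v rest ih =>
    intro t
    have h1 := ih (max t ((Γ v).getD 0) + I.μ v * I.g)
    have h2 : t ≤ max t ((Γ v).getD 0) + I.μ v * I.g := by
      have := mul_nonneg (hμ v) hg
      have := le_max_left t ((Γ v).getD 0)
      linarith
    exact le_trans h2 h1

theorem loadFold_mem (hμ : ∀ v, 0 ≤ I.μ v) (hg : 0 ≤ I.g) (Γ : ν → Option ℝ) :
    ∀ (l : List ν) (t : ℝ) (v : ν), v ∈ l → (Γ v).getD 0 ≤ loadFold I Γ t l := by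
  intro l
  induction l with
  | nil => simp
  | cons w rest ih =>
    intro t v hv
    rcases List.mem_cons.mp hv with rfl | hv
    · have h1 := loadFold_ge hμ hg Γ rest (max t ((Γ v).getD 0) + I.μ v * I.g)
      have h2 : (Γ v).getD 0 ≤ max t ((Γ v).getD 0) + I.μ v * I.g := by
        have := mul_nonneg (hμ v) hg
        have := le_max_right t ((Γ v).getD 0)
        linarith
      exact le_trans h2 h1
    · exact ih _ v hv

theorem foldl_erase_subset : ∀ (dl : List ν) (s : Finset ν),
    dl.foldl Finset.erase s ⊆ s := by
  intro dl
  induction dl with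
  | nil => intro s; simp
  | cons d rest ih =>
    intro s
    exact (ih (s.erase d)).trans (Finset.erase_subset _ _)

end Aux

section Main
set_option linter.unusedSectionVars false
set_option linter.unusedVariables false
set_option maxHeartbeats 1000000

variable {ν : Type} [DecidableEq ν] [Fintype ν]

def entriesOf (I : Inst ν) (S : Superstep ν I.P) (st : (Fin I.P → ℝ) × (ν → Option ℝ)) :
    List (ν × ℝ) :=
  ((List.finRange I.P).map
    (fun p => saveFinishes I (st.1 p + listCost I (S.comp p)) (S.save p))).flatten

def GammaOf (I : Inst ν) (S : Superstep ν I.P) (st : (Fin I.P → ℝ) × (ν → Option ℝ))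
    (v : ν) : Option ℝ :=
  (st.2 v).orElse (fun _ => minSaveTime (entriesOf I S st) v)

theorem asyncSS_fst (I : Inst ν) (S : Superstep ν I.P) (st : (Fin I.P → ℝ) × (ν → Option ℝ))
    (p : Fin I.P) : (asyncSS I S st).1 p =
      loadFold I (GammaOf I S st)
        (st.1 p + listCost I (S.comp p) + ioCost I (S.save p)) (S.load p) := rfl

theorem asyncSS_snd (I : Inst ν) (S : Superstep ν I.P) (st : (Fin I.P → ℝ) × (ν → Option ℝ))
    (v : ν) : (asyncSS I S st).2 v = GammaOf I S st v := rfl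

structure Inv (I : Inst ν) (Wf : ν → ℝ) (c : Config ν I.P)
    (st : (Fin I.P → ℝ) × (ν → Option ℝ)) : Prop where
  hR : ∀ p, ∀ v ∈ c.R p, Wf v ≤ st.1 p
  hsome : ∀ v t, st.2 v = some t → Wf v ≤ t
  hnone : ∀ v ∈ c.B, st.2 v = none → Wf v ≤ 0
  hpos : ∀ p, 0 ≤ st.1 p
  hle : ∀ v t, st.2 v = some t → ∃ p, t ≤ st.1 p

theorem inv_step {I : Inst ν} (hwf : WellFounded I.edge) (hω : ∀ v, 0 ≤ I.ω v)
    (hμ : ∀ v, 0 ≤ I.μ v) (hg : 0 ≤ I.g)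
    {c : Config ν I.P} {S : Superstep ν I.P} {st : (Fin I.P → ℝ) × (ν → Option ℝ)}
    (hv : ssValid I c S) (hinv : Inv I (W I hwf) c st) :
    Inv I (W I hwf) (stepConfig c S) (asyncSS I S st) := by
  obtain ⟨hvc, hvs, hvsave, hvload, hvmem⟩ := hv
  have hcomp : ∀ p, ∀ v ∈ afterComp c S p, W I hwf v ≤ st.1 p + listCost I (S.comp p) := by
    intro p v hv
    exact comp_run hwf hω (S.comp p) (c.R p) c.B (st.1 p) (hvc p) (hvs p) (hinv.hR p) v hv
  have hentry : ∀ e ∈ entriesOf I S st, W I hwf e.1 ≤ e.2 ∧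
      ∃ p, e.2 ≤ st.1 p + listCost I (S.comp p) + ioCost I (S.save p) := by
    intro e he
    rw [entriesOf, List.mem_flatten] at he
    obtain ⟨L, hL, heL⟩ := he
    obtain ⟨p, _, rfl⟩ := List.mem_map.mp hL
    obtain ⟨h1, h2, h3⟩ := saveFinishes_spec hμ hg _ _ e heL
    exact ⟨le_trans (hcomp p e.1 (hvsave p e.1 h1)) h2, ⟨p, h3⟩⟩
  have hmementry : ∀ (p : Fin I.P) (v : ν), v ∈ S.save p →
      ∃ τ, (v, τ) ∈ entriesOf I S st := by
    intro p v hvp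
    obtain ⟨τ, hτ⟩ := saveFinishes_mem (S.save p) (st.1 p + listCost I (S.comp p)) v hvp
    exact ⟨τ, List.mem_flatten.mpr ⟨_, List.mem_map.mpr ⟨p, List.mem_finRange p, rfl⟩, hτ⟩⟩
  have hG_some : ∀ v t, GammaOf I S st v = some t → W I hwf v ≤ t ∧
      ∃ p, t ≤ st.1 p + listCost I (S.comp p) + ioCost I (S.save p) := by
    intro v t hG
    cases hst : st.2 v with
    | some t0 =>
      have h0 : GammaOf I S st v = some t0 := by rw [GammaOf, hst]; rfl
      rw [h0] at hG
      obtain rfl : t0 = t := Option.some.inj hG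
      obtain ⟨p, hp⟩ := hinv.hle v t0 hst
      have hl := listCost_nonneg hω hμ hg (S.comp p)
      have hi := ioCost_nonneg hμ hg (S.save p)
      exact ⟨hinv.hsome v t0 hst, ⟨p, by linarith⟩⟩
    | none =>
      have h0 : GammaOf I S st v = minSaveTime (entriesOf I S st) v := by
        rw [GammaOf, hst]; rfl
      rw [h0] at hG
      have := hentry (v, t) (minSaveTime_some hG)
      exact this
  have hG_none : ∀ v, GammaOf I S st v = none →
      st.2 v = none ∧ ∀ p : Fin I.P, v ∉ S.save p := by
    intro v hG
    cases hst : st.2 v with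
    | some t0 =>
      have h0 : GammaOf I S st v = some t0 := by rw [GammaOf, hst]; rfl
      rw [h0] at hG; exact absurd hG (by simp)
    | none =>
      have h0 : GammaOf I S st v = minSaveTime (entriesOf I S st) v := by
        rw [GammaOf, hst]; rfl
      rw [h0] at hG
      refine ⟨rfl, fun p hvp => ?_⟩
      obtain ⟨τ, hτ⟩ := hmementry p v hvp
      exact minSaveTime_none hG τ hτ
  have hBnew : ∀ v, v ∈ newB c S → (∀ p : Fin I.P, v ∉ S.save p) → v ∈ c.B := by
    intro v hvb h3
    rw [newB] at hvb
    rcases Finset.mem_union.mp hvb with h | h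
    · exact h
    · obtain ⟨p', _, hp'⟩ := Finset.mem_biUnion.mp h
      exact absurd (List.mem_toFinset.mp hp') (h3 p')
  constructor
  · -- hR
    intro p v hv
    rw [asyncSS_fst]
    have hv' : v ∈ afterDel c S p ∪ (S.load p).toFinset := hv
    have hio := ioCost_nonneg hμ hg (S.save p)
    rcases Finset.mem_union.mp hv' with hv1 | hv1
    · have h1 : v ∈ afterComp c S p := foldl_erase_subset _ _ hv1
      have h2 := hcomp p v h1
      have h3 := loadFold_ge hμ hg (GammaOf I S st) (S.load p)
        (st.1 p + listCost I (S.comp p) + ioCost I (S.save p))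
      linarith
    · have hvl : v ∈ S.load p := List.mem_toFinset.mp hv1
      have h1 : W I hwf v ≤ (GammaOf I S st v).getD 0 := by
        cases hG : GammaOf I S st v with
        | some t => simpa using (hG_some v t hG).1
        | none =>
          have hvnb : v ∈ newB c S := hvload p v hvl
          obtain ⟨h2, h3⟩ := hG_none v hG
          simpa using hinv.hnone v (hBnew v hvnb h3) h2
      exact le_trans h1 (loadFold_mem hμ hg _ (S.load p) _ v hvl)
  · -- hsome
    intro v t hG
    rw [asyncSS_snd] at hG
    exact (hG_some v t hG).1
  · -- hnone
    intro v hvb hG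
    rw [asyncSS_snd] at hG
    obtain ⟨h2, h3⟩ := hG_none v hG
    exact hinv.hnone v (hBnew v hvb h3) h2
  · -- hpos
    intro p
    rw [asyncSS_fst]
    have h1 := loadFold_ge hμ hg (GammaOf I S st) (S.load p)
      (st.1 p + listCost I (S.comp p) + ioCost I (S.save p))
    have h2 := listCost_nonneg hω hμ hg (S.comp p)
    have h3 := ioCost_nonneg hμ hg (S.save p)
    have h4 := hinv.hpos p
    linarith
  · -- hle
    intro v t hG
    rw [asyncSS_snd] at hG
    obtain ⟨_, p, hp⟩ := hG_some v t hG
    refine ⟨p, ?_⟩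
    rw [asyncSS_fst]
    exact le_trans hp (loadFold_ge hμ hg _ _ _)

theorem inv_run {I : Inst ν} (hwf : WellFounded I.edge) (hω : ∀ v, 0 ≤ I.ω v)
    (hμ : ∀ v, 0 ≤ I.μ v) (hg : 0 ≤ I.g) :
    ∀ (sched : Schedule ν I.P) (c : Config ν I.P) (st : (Fin I.P → ℝ) × (ν → Option ℝ)),
      schedValidFrom I c sched → Inv I (W I hwf) c st →
      Inv I (W I hwf) (runSched c sched) (asyncRun I st sched) := by
  intro sched
  induction sched with
  | nil => intro c st _ h; exact h
  | cons S rest ih =>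
    intro c st hsv hinv
    exact ih _ _ hsv.2 (inv_step hwf hω hμ hg hsv.1 hinv)

end Main
/-- For every MBSP instance and valid schedule, the asynchronous
cost is at least `Σ ω(w_i)` over the non-source nodes of any directed path
`(w_1,…,w_k)` of the DAG (hence at least the maximum over all directed paths). -/
theorem statement_14 {ν : Type} [Fintype ν] [DecidableEq ν] (I : Inst ν)
    (hω : ∀ v, 0 ≤ I.ω v) (hμ : ∀ v, 0 ≤ I.μ v) (hr : 0 ≤ I.r) (hg : 0 ≤ I.g)
    (hL : 0 ≤ I.L) (hac : Acyclic I)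
    (sched : Schedule ν I.P) (hval : Valid I sched) :
    ∀ path : List ν, path.Chain' I.edge →
      (path.map (Set.indicator {v | ¬ isSource I v} I.ω)).sum ≤ asyncCost I sched := by
  intro path hchain
  have hwf := edge_wf hac
  have hswf := swap_wf hac
  obtain ⟨B0, hB0, hsv, hsink⟩ := hval
  have hinv0 : Inv I (W I hwf) ⟨fun _ => ∅, B0⟩ (fun _ => (0 : ℝ), fun _ => none) := by
    constructor
    · intro p v hv; simp at hv
    · intro v t h; simp at h
    · intro v hv _; rw [W_source hwf ((hB0 v).mp hv)]
    · intro p; exact le_rfl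
    · intro v t h; simp at h
  have hfin := inv_run hwf hω hμ hg sched _ _ hsv hinv0
  have hACdef : asyncCost I sched =
      ⨆ p : Fin I.P, (asyncRun I (fun _ => (0 : ℝ), fun _ => none) sched).1 p := rfl
  have hbdd : BddAbove (Set.range
      fun p : Fin I.P => (asyncRun I (fun _ => (0 : ℝ), fun _ => none) sched).1 p) :=
    Set.Finite.bddAbove (Set.finite_range _)
  have hsup : ∀ p : Fin I.P,
      (asyncRun I (fun _ => (0 : ℝ), fun _ => none) sched).1 p ≤ asyncCost I sched := by
    intro p; rw [hACdef]; exact le_ciSup hbdd p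
  have hac0 : (0 : ℝ) ≤ asyncCost I sched := by
    rcases isEmpty_or_nonempty (Fin I.P) with h | hne
    · rw [hACdef, Real.iSup_of_isEmpty]
    · obtain ⟨p⟩ := hne
      exact le_trans (hfin.hpos p) (hsup p)
  have hsinkB : ∀ s, isSink I s → W I hwf s ≤ asyncCost I sched := by
    intro s hs
    have hsB : s ∈ (runSched (⟨fun _ => ∅, B0⟩ : Config ν I.P) sched).B := hsink s hs
    cases hG : (asyncRun I (fun _ => (0 : ℝ), fun _ => none) sched).2 s with
    | none => exact le_trans (hfin.hnone s hsB hG) hac0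
    | some t =>
      obtain ⟨p, hp⟩ := hfin.hle s t hG
      exact le_trans (hfin.hsome s t hG) (le_trans hp (hsup p))
  cases path with
  | nil => simpa using hac0
  | cons v rest =>
    have hch : List.Chain I.edge v rest := hchain
    have h1 := chain_sum_le hwf hω rest v hch
    obtain ⟨s, hs, h2⟩ := exists_sink hwf hswf hω ((v :: rest).getLast (by simp))
    have h3 := ind_le_W hwf hω v
    have h4 := hsinkB s hs
    simp only [List.map_cons, List.sum_cons]
    linarith

end MBSP
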